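/- arXiv:1610.01760 — 3 statements merged into one kernel-verified Lean document; each statement's English description precedes it below -/
import Mathlib

section
/- Let L and M be complete lattices and let f : L → M be a complete lattice homomorphism. If a set filter 𝓕 on L order-converges to x ∈ L, then the image filter f(𝓕) (the filter on M generated by the filter base {f(F) : F ∈ 𝓕}) order-converges to f(x). -/
/-- `𝓕ᵘ`: the union of the sets of upper bounds of the members of the filter `𝓕`. -/
def filterUpperBounds {P : Type*} [Preorder P] (𝓕 : Filter P) : Set P :=
  ⋃ F ∈ 𝓕.sets, upperBounds F

/-- `𝓕ˡ`: the union of the sets of lower bounds of the members of the filter `𝓕`. -/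
def filterLowerBounds {P : Type*} [Preorder P] (𝓕 : Filter P) : Set P :=
  ⋃ F ∈ 𝓕.sets, lowerBounds F

/-- A filter `𝓕` on a complete lattice order-converges to `x` if `inf 𝓕ᵘ = x = sup 𝓕ˡ`. -/
def OrderConverges {P : Type*} [CompleteLattice P] (𝓕 : Filter P) (x : P) : Prop :=
  sInf (filterUpperBounds 𝓕) = x ∧ sSup (filterLowerBounds 𝓕) = x

/-- If `f : L → M` is a complete lattice homomorphism between complete lattices and the
(proper) set filter `𝓕` on `L` order-converges to `x`, then the image filter `f(𝓕)`
order-converges to `f x`. -/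
theorem orderConverges_map_of_completeLatticeHom
    {L M : Type*} [CompleteLattice L] [CompleteLattice M] (f : L → M)
    (hsSup : ∀ S : Set L, f (sSup S) = sSup (f '' S))
    (hsInf : ∀ S : Set L, f (sInf S) = sInf (f '' S))
    (𝓕 : Filter L) [𝓕.NeBot] (x : L) (h : OrderConverges 𝓕 x) :
    OrderConverges (𝓕.map f) (f x) := by
  obtain ⟨hinf, hsup⟩ := h
  have hmono : Monotone f := by
    intro a b hab
    have : f b = f a ⊔ f b := by
      have := hsSup {a, b}
      rw [Set.image_pair] at this
      simpa [sup_eq_right.mpr hab] using this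
    rw [this]; exact le_sup_left
  constructor
  · -- inf of upper bounds of map f 𝓕 equals f x
    apply le_antisymm
    · -- sInf ≤ f x : use f '' 𝓕ᵘ ⊆ (map f 𝓕)ᵘ and f x = sInf (f '' 𝓕ᵘ)
      have hx : f x = sInf (f '' filterUpperBounds 𝓕) := by rw [← hinf, hsInf]
      rw [hx]
      apply sInf_le_sInf
      rintro _ ⟨a, ha, rfl⟩
      simp only [filterUpperBounds, Set.mem_iUnion] at ha ⊢
      obtain ⟨F, hF, haF⟩ := ha
      refine ⟨f '' F, ?_, ?_⟩
      · exact Filter.image_mem_map hF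
      · rintro _ ⟨y, hy, rfl⟩; exact hmono (haF hy)
    · -- f x ≤ every element of (map f 𝓕)ᵘ
      apply le_sInf
      intro b hb
      simp only [filterUpperBounds, Set.mem_iUnion] at hb
      obtain ⟨S, hS, hbS⟩ := hb
      -- hS : f ⁻¹' S ∈ 𝓕
      have h1 : x ≤ sSup (f ⁻¹' S) := by
        rw [← hinf]
        apply sInf_le
        simp only [filterUpperBounds, Set.mem_iUnion]
        exact ⟨f ⁻¹' S, hS, fun y hy => le_sSup hy⟩
      calc f x ≤ f (sSup (f ⁻¹' S)) := hmono h1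
        _ = sSup (f '' (f ⁻¹' S)) := hsSup _
        _ ≤ b := sSup_le (by rintro _ ⟨y, hy, rfl⟩; exact hbS hy)
  · apply le_antisymm
    · apply sSup_le
      intro b hb
      simp only [filterLowerBounds, Set.mem_iUnion] at hb
      obtain ⟨S, hS, hbS⟩ := hb
      have h1 : sInf (f ⁻¹' S) ≤ x := by
        rw [← hsup]
        apply le_sSup
        simp only [filterLowerBounds, Set.mem_iUnion]
        exact ⟨f ⁻¹' S, hS, fun y hy => sInf_le hy⟩
      calc b ≤ sInf (f '' (f ⁻¹' S)) := le_sInf (by rintro _ ⟨y, hy, rfl⟩; exact hbS hy)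
        _ = f (sInf (f ⁻¹' S)) := (hsInf _).symm
        _ ≤ f x := hmono h1
    · have hx : f x = sSup (f '' filterLowerBounds 𝓕) := by rw [← hsup, hsSup]
      rw [hx]
      apply sSup_le_sSup
      rintro _ ⟨a, ha, rfl⟩
      simp only [filterLowerBounds, Set.mem_iUnion] at ha ⊢
      obtain ⟨F, hF, haF⟩ := ha
      refine ⟨f '' F, Filter.image_mem_map hF, ?_⟩
      rintro _ ⟨y, hy, rfl⟩; exact hmono (haF hy)
end

section
/- Let 2 = {0,1} be the two-element chain with 0 < 1 and let 2^ω be the set of all functions ω → 2 with the pointwise (componentwise) order. The interval topology on 2^ω coincides with the product topology on 2^ω obtained from the discrete topology on each factor 2 (i.e., with the topology of the Cantor space). -/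
open Set Topology

/-- The interval topology on a preorder: the topology whose closed sets are generated by
the subbasis of all principal down-sets `↓x = Iic x` and all principal up-sets `↑x = Ici x`,
i.e. the topology generated by the complements of these sets. -/
def intervalTopology (α : Type*) [Preorder α] : TopologicalSpace α :=
  TopologicalSpace.generateFrom {s | ∃ a : α, s = (Set.Ici a)ᶜ ∨ s = (Set.Iic a)ᶜ}

lemma fiber_true (n : ℕ) :
    {f : ℕ → Bool | f n = true} = (Set.Iic (Function.update (fun _ => true) n false))ᶜ := by
  ext f
  simp only [Set.mem_setOf_eq, Set.mem_compl_iff, Set.mem_Iic, Pi.le_def, not_forall]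
  constructor
  · intro h
    exact ⟨n, by simp [h, Function.update_self]⟩
  · rintro ⟨m, hm⟩
    by_cases hmn : m = n
    · subst hmn
      simp only [Function.update_self] at hm
      cases h : f m <;> simp [h] at hm ⊢
    · simp [Function.update_of_ne hmn] at hm

lemma fiber_false (n : ℕ) :
    {f : ℕ → Bool | f n = false} = (Set.Ici (Function.update (fun _ => false) n true))ᶜ := by
  ext f
  simp only [Set.mem_setOf_eq, Set.mem_compl_iff, Set.mem_Ici, Pi.le_def, not_forall]
  constructor
  · intro h
    exact ⟨n, by simp [h, Function.update_self]⟩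
  · rintro ⟨m, hm⟩
    by_cases hmn : m = n
    · subst hmn
      simp only [Function.update_self] at hm
      cases h : f m <;> simp [h] at hm ⊢
    · simp [Function.update_of_ne hmn] at hm

/-- The interval topology on `2^ω` (the functions `ω → 2` with the pointwise order, where
`2 = {0 < 1}` is modelled by `Bool` with `false < true`) coincides with the product topology
obtained from the discrete topology on each factor, i.e. with the Cantor space topology. -/
theorem intervalTopology_cantor :
    intervalTopology (ℕ → Bool) = @Pi.topologicalSpace ℕ (fun _ => Bool) (fun _ => ⊥) := by
  show intervalTopology (ℕ → Bool) = Pi.topologicalSpace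
  apply le_antisymm
  · -- interval topology is finer: id : interval → product is continuous
    rw [← continuous_id_iff_le]
    letI : TopologicalSpace (ℕ → Bool) := intervalTopology (ℕ → Bool)
    rw [continuous_pi_iff]
    intro n
    rw [continuous_discrete_rng]
    intro b
    show IsOpen {f : ℕ → Bool | f n = b}
    cases b
    · rw [fiber_false]
      exact TopologicalSpace.GenerateOpen.basic _ ⟨_, Or.inl rfl⟩
    · rw [fiber_true]
      exact TopologicalSpace.GenerateOpen.basic _ ⟨_, Or.inr rfl⟩
  · -- product topology is finer: each subbasic set is product-open
    apply le_generateFrom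
    have key : ∀ (a : ℕ → Bool) (s : ℕ → Set Bool),
        IsClosed {f : ℕ → Bool | ∀ n, f n ∈ s n} := by
      intro a s
      have : {f : ℕ → Bool | ∀ n, f n ∈ s n} = ⋂ n, (fun f : ℕ → Bool => f n) ⁻¹' s n := by
        ext f; simp
      rw [this]
      exact isClosed_iInter fun n => (isClosed_discrete _).preimage (continuous_apply n)
    rintro s ⟨a, rfl | rfl⟩
    · have : Set.Ici a = {f : ℕ → Bool | ∀ n, f n ∈ Set.Ici (a n)} := by
        ext f; simp [Pi.le_def]
      exact (this ▸ key a _).isOpen_compl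
    · have : Set.Iic a = {f : ℕ → Bool | ∀ n, f n ∈ Set.Iic (a n)} := by
        ext f; simp [Pi.le_def]
      exact (this ▸ key a _).isOpen_compl
end

section
/- Let 2 = {0,1} with 0 < 1 and let 2^ω be the set of all functions ω → 2 with the pointwise order. The interval topology on 2^ω is Hausdorff. -/
open Set Topology

lemma trueSet_eq (n : ℕ) :
    {h : ℕ → Bool | h n = true} = (Set.Iic (fun m => if m = n then false else true))ᶜ := by
  ext h
  simp only [Set.mem_setOf_eq, Set.mem_compl_iff, Set.mem_Iic, Pi.le_def]
  constructor
  · intro ht hle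
    have := hle n
    simp [ht] at this
    exact absurd this (by decide)
  · intro hnle
    by_contra hf
    apply hnle
    intro m
    by_cases hm : m = n
    · subst hm
      simp [Bool.not_eq_true] at hf
      simp [hf]
    · simp [hm]

lemma falseSet_eq (n : ℕ) :
    {h : ℕ → Bool | h n = false} = (Set.Ici (fun m => if m = n then true else false))ᶜ := by
  ext h
  simp only [Set.mem_setOf_eq, Set.mem_compl_iff, Set.mem_Ici, Pi.le_def]
  constructor
  · intro ht hle
    have := hle n
    simp [ht] at this
    exact absurd this (by decide)
  · intro hnle
    by_contra hf
    apply hnle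
    intro m
    by_cases hm : m = n
    · subst hm
      simp [Bool.not_eq_false] at hf
      simp [hf]
    · simp [hm]

/-- The interval topology on `2^ω` (functions `ω → 2` with the pointwise order, where
`2 = {0 < 1}` is modelled by `Bool` with `false < true`) is Hausdorff. -/
theorem intervalTopology_cantor_t2 :
    @T2Space (ℕ → Bool) (intervalTopology (ℕ → Bool)) := by
  letI : TopologicalSpace (ℕ → Bool) := intervalTopology (ℕ → Bool)
  constructor
  intro f g hfg
  obtain ⟨n, hn⟩ : ∃ n, f n ≠ g n := by
    by_contra h
    push_neg at h
    exact hfg (funext h)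
  have hUopen : IsOpen {h : ℕ → Bool | h n = true} := by
    rw [trueSet_eq]
    exact TopologicalSpace.GenerateOpen.basic _ ⟨_, Or.inr rfl⟩
  have hVopen : IsOpen {h : ℕ → Bool | h n = false} := by
    rw [falseSet_eq]
    exact TopologicalSpace.GenerateOpen.basic _ ⟨_, Or.inl rfl⟩
  have hdisj : Disjoint {h : ℕ → Bool | h n = true} {h : ℕ → Bool | h n = false} := by
    rw [Set.disjoint_left]
    intro h ht hf
    simp only [Set.mem_setOf_eq] at ht hf
    rw [ht] at hf
    exact Bool.noConfusion hf
  cases hft : f n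
  · have hgt : g n = true := by
      cases hgt : g n
      · exact absurd (hft.trans hgt.symm) hn
      · rfl
    exact ⟨_, _, hVopen, hUopen, hft, hgt, hdisj.symm⟩
  · have hgf : g n = false := by
      cases hgf : g n
      · rfl
      · exact absurd (hft.trans hgf.symm) hn
    exact ⟨_, _, hUopen, hVopen, hft, hgf, hdisj⟩
end
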